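/- Let r_1, r_2 ≥ 1 and integers a, b_1 ≤ b_2, c with 0 < a < r_2, 0 < b_1, b_2 < r_2, 0 < c < r_1, such that A_+(z) = [[1+z^{r_1}, -z^a],[-z^{b_1}-z^{b_2}, 1+z^{r_2}]] and A_-(z) = [[1+z^{r_1}-z^c, 0],[0, 1+z^{r_2}]] satisfy the symplectic property A_+(z)A_-(z^{-1})^T = A_-(z)A_+(z^{-1})^T. Then r_1 = 2c, r_2 = 3c, b_1 = 2c - a, and b_2 = 3c - a. -/

import Mathlib

open LaurentPolynomial Matrix

lemma co_add (p q : LaurentPolynomial ℤ) (k : ℤ) : (p + q).coeff k = p.coeff k + q.coeff k := by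
  rw [AddMonoidAlgebra.coeff_add, Finsupp.add_apply]

lemma co_sub (p q : LaurentPolynomial ℤ) (k : ℤ) : (p - q).coeff k = p.coeff k - q.coeff k := by
  rw [AddMonoidAlgebra.coeff_sub, Finsupp.sub_apply]

lemma co_neg (p : LaurentPolynomial ℤ) (k : ℤ) : (-p).coeff k = -(p.coeff k) := by
  rw [AddMonoidAlgebra.coeff_neg, Finsupp.neg_apply]

set_option maxHeartbeats 1200000 in
theorem Apm_z_5 (r₁ r₂ a b₁ b₂ c : ℤ) (hr₁ : 1 ≤ r₁) (hr₂ : 1 ≤ r₂)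
    (ha : 0 < a) (har : a < r₂) (hb₁ : 0 < b₁) (hb₁r : b₁ < r₂)
    (hb₂ : 0 < b₂) (hb₂r : b₂ < r₂) (hb12 : b₁ ≤ b₂)
    (hc : 0 < c) (hcr : c < r₁)
    (hsymp :
      let Ap : Matrix (Fin 2) (Fin 2) (LaurentPolynomial ℤ) :=
        !![1 + T r₁, -T a; -T b₁ - T b₂, 1 + T r₂]
      let Am : Matrix (Fin 2) (Fin 2) (LaurentPolynomial ℤ) :=
        !![1 + T r₁ - T c, 0; 0, 1 + T r₂]
      Ap * (Am.map (invert (R := ℤ)))ᵀ = Am * (Ap.map (invert (R := ℤ)))ᵀ) :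
    r₁ = 2 * c ∧ r₂ = 3 * c ∧ b₁ = 2 * c - a ∧ b₂ = 3 * c - a := by
  simp only [] at hsymp
  rw [← Matrix.ext_iff] at hsymp
  have h00 := hsymp 0 0
  have h01 := hsymp 0 1
  simp only [Matrix.mul_apply, Fin.sum_univ_two, Matrix.map_apply, Matrix.transpose_apply,
    Matrix.cons_val_zero, Matrix.cons_val_one, Matrix.head_cons, Matrix.head_fin_const,
    Matrix.of_apply, Matrix.cons_val', Matrix.empty_val', Matrix.cons_val_fin_one,
    invert_T, map_add, map_sub, _root_.map_one, map_neg, map_zero, mul_zero, zero_mul,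
    add_zero, zero_add] at h00 h01
  ring_nf at h00 h01
  simp only [← T_add] at h00 h01
  -- Step 1 : r₁ = 2c
  have e1 : r₁ = 2 * c := by
    have e := congrArg (fun p : LaurentPolynomial ℤ => p.coeff (-c)) h00
    simp only [← T_zero, co_add, co_sub, co_neg, T_apply] at e
    split_ifs at e <;> omega
  -- Step 2 : b₂ = b₁ + c
  have e2 : b₂ = b₁ + c := by
    have e := congrArg (fun p : LaurentPolynomial ℤ => p.coeff (c + -b₂)) h01
    simp only [← T_zero, co_add, co_sub, co_neg, T_apply] at e
    split_ifs at e <;> omega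
  -- Step 3 : b₁ = 2c - a
  have e3 : b₁ = 2 * c - a := by
    have e := congrArg (fun p : LaurentPolynomial ℤ => p.coeff a) h01
    simp only [← T_zero, co_add, co_sub, co_neg, T_apply] at e
    split_ifs at e <;> omega
  -- Step 4 : r₂ = 3c
  have e4 : r₂ = 3 * c := by
    have e := congrArg (fun p : LaurentPolynomial ℤ => p.coeff (-r₂ + a)) h01
    simp only [← T_zero, co_add, co_sub, co_neg, T_apply] at e
    split_ifs at e <;> omega
  exact ⟨e1, e4, e3, by omega⟩
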